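/- For every integer d ≥ 1 and all density matrices σ and τ on ℂ^d, the trace distance between the maximally entangled state and the product state σ ⊗ τ satisfies ‖Ψ⁺ − σ ⊗ₖ τ‖₁ ≥ 2(1 − 1/√d), where Ψ⁺ is the maximally entangled state on ℂ^d ⊗ ℂ^d and ‖·‖₁ is the trace norm. -/

import Mathlib

open Matrix Kronecker
open scoped ComplexOrder BigOperators

lemma quad_bound {n : Type*} [Fintype n] [DecidableEq n]
    {A : Matrix n n ℂ} (hA : A.IsHermitian) (v : n → ℂ) (hv : star v ⬝ᵥ v = 1) :
    2 * (star v ⬝ᵥ (A *ᵥ v)).re - A.trace.re ≤ ∑ i, |hA.eigenvalues i| := by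
  set U : Matrix n n ℂ := (hA.eigenvectorUnitary : Matrix n n ℂ) with hU
  have hUuni : U * star U = 1 := (Matrix.mem_unitaryGroup_iff).mp (hA.eigenvectorUnitary).2
  set w : n → ℂ := (star U) *ᵥ v with hw
  have hstarw : star v ᵥ* U = star w := by
    rw [hw, star_mulVec]
    simp [Matrix.star_eq_conjTranspose]
  have hkey : star v ⬝ᵥ (A *ᵥ v) = ∑ i, (hA.eigenvalues i : ℂ) * Complex.normSq (w i) := by
    conv_lhs => rw [hA.spectral_theorem, Unitary.conjStarAlgAut_apply]
    rw [← mulVec_mulVec, ← mulVec_mulVec, dotProduct_mulVec, hstarw]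
    simp [Matrix.mulVec_diagonal, dotProduct, Complex.normSq_eq_conj_mul_self]
    refine Finset.sum_congr rfl fun x _ => ?_
    rw [← hU, ← hw]; ring
  have hwnorm : ∑ i, (Complex.normSq (w i) : ℝ) = 1 := by
    have h1 : star w ⬝ᵥ w = 1 := by
      rw [hw, ← hstarw, ← dotProduct_mulVec, mulVec_mulVec, hUuni, one_mulVec, hv]
    have h2 : star w ⬝ᵥ w = ((∑ i, (Complex.normSq (w i) : ℝ) : ℝ) : ℂ) := by
      push_cast
      simp [dotProduct, Complex.normSq_eq_conj_mul_self]
    rw [h2] at h1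
    exact_mod_cast h1
  have htr : A.trace.re = ∑ i, hA.eigenvalues i := by
    nth_rewrite 1 [hA.spectral_theorem]
    rw [Unitary.conjStarAlgAut_apply]
    rw [Matrix.trace_mul_cycle,
      (Matrix.mem_unitaryGroup_iff').mp (hA.eigenvectorUnitary).2, one_mul, Matrix.trace_diagonal]
    simp
  rw [hkey, htr]
  have hre : (∑ i, (hA.eigenvalues i : ℂ) * (Complex.normSq (w i) : ℂ)).re
      = ∑ i, hA.eigenvalues i * Complex.normSq (w i) := by
    -- push_cast
    rw [Complex.re_sum]
    simp
  rw [hre]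
  rw [Finset.mul_sum, ← Finset.sum_sub_distrib]
  have hple : ∀ i : n, Complex.normSq (w i) ≤ 1 := by
    intro i
    calc Complex.normSq (w i) ≤ ∑ j, Complex.normSq (w j) :=
          Finset.single_le_sum (fun j _ => Complex.normSq_nonneg (w j)) (Finset.mem_univ i)
      _ = 1 := hwnorm
  refine Finset.sum_le_sum fun i _ => ?_
  have h1 : 2 * (hA.eigenvalues i * Complex.normSq (w i)) - hA.eigenvalues i
      = hA.eigenvalues i * (2 * Complex.normSq (w i) - 1) := by ring
  rw [h1]
  calc hA.eigenvalues i * (2 * Complex.normSq (w i) - 1)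
      ≤ |hA.eigenvalues i * (2 * Complex.normSq (w i) - 1)| := le_abs_self _
    _ = |hA.eigenvalues i| * |2 * Complex.normSq (w i) - 1| := abs_mul _ _
    _ ≤ |hA.eigenvalues i| * 1 := by
        gcongr
        rw [abs_le]
        constructor
        · nlinarith [Complex.normSq_nonneg (w i)]
        · nlinarith [hple i]
    _ = |hA.eigenvalues i| := mul_one _

lemma entry_abs_le {n : Type*} [Fintype n] {M : Matrix n n ℂ} (hM : M.PosSemidef)
    (i k : n) : ‖M i k‖ ≤ Real.sqrt ((M i i).re) * Real.sqrt ((M k k).re) := by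
  classical
  obtain ⟨B, hB⟩ : ∃ B : Matrix n n ℂ, M = Bᴴ * B := by
    open scoped MatrixOrder in
    obtain ⟨B, hB⟩ := CStarAlgebra.nonneg_iff_eq_star_mul_self.mp hM.nonneg
    exact ⟨B, hB⟩
  subst hB
  have hentry : ∀ a b : n, (Bᴴ * B) a b = ∑ j, (starRingEnd ℂ) (B j a) * B j b := by
    intro a b
    simp [Matrix.mul_apply, Matrix.conjTranspose_apply]
  have hdiag : ∀ a : n, ((Bᴴ * B) a a).re = ∑ j, ‖B j a‖ ^ 2 := by
    intro a
    rw [hentry]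
    rw [Complex.re_sum]
    refine Finset.sum_congr rfl fun j _ => ?_
    rw [← Complex.normSq_eq_conj_mul_self]
    rw [Complex.normSq_eq_norm_sq]
    norm_cast
  rw [hdiag, hdiag, hentry]
  calc ‖∑ j, (starRingEnd ℂ) (B j i) * B j k‖
      ≤ ∑ j, ‖(starRingEnd ℂ) (B j i) * B j k‖ :=
        norm_sum_le _ _
    _ ≤ Real.sqrt (∑ j, ‖B j i‖ ^ 2) * Real.sqrt (∑ j, ‖B j k‖ ^ 2) := by
        rw [← Real.sqrt_mul (Finset.sum_nonneg fun j _ => sq_nonneg _)]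
        rw [show (∑ j, ‖(starRingEnd ℂ) (B j i) * B j k‖)
            = ∑ j, ‖B j i‖ * ‖B j k‖ by
          refine Finset.sum_congr rfl fun j _ => ?_
          simp [_root_.map_mul]]
        exact Real.le_sqrt_of_sq_le (Finset.sum_mul_sq_le_sq_mul_sq _ _ _)

lemma frob_bound {n : Type*} [Fintype n] [DecidableEq n] {σ τ : Matrix n n ℂ}
    (hσ : σ.PosSemidef) (hτ : τ.PosSemidef) (hσtr : σ.trace = 1) (hτtr : τ.trace = 1) :
    (∑ i, ∑ k, σ i k * τ i k).re ≤ 1 := by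
  have hs : ∀ i, 0 ≤ (σ i i).re := by
    intro i
    have := hσ.re_dotProduct_nonneg (Pi.single i 1)
    simpa [dotProduct, Matrix.mulVec, Pi.single_apply, Finset.sum_ite_eq,
      apply_ite] using this
  have ht : ∀ i, 0 ≤ (τ i i).re := by
    intro i
    have := hτ.re_dotProduct_nonneg (Pi.single i 1)
    simpa [dotProduct, Matrix.mulVec, Pi.single_apply, Finset.sum_ite_eq,
      apply_ite] using this
  have hstr : ∑ i, (σ i i).re = 1 := by
    have := congrArg Complex.re hσtr
    simpa [Matrix.trace, Matrix.diag, Complex.re_sum] using this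
  have httr : ∑ i, (τ i i).re = 1 := by
    have := congrArg Complex.re hτtr
    simpa [Matrix.trace, Matrix.diag, Complex.re_sum] using this
  set r : n → ℝ := fun i => Real.sqrt ((σ i i).re) * Real.sqrt ((τ i i).re) with hr
  calc (∑ i, ∑ k, σ i k * τ i k).re
      ≤ ‖∑ i, ∑ k, σ i k * τ i k‖ := Complex.re_le_norm _
    _ ≤ ∑ i, ∑ k, ‖σ i k * τ i k‖ :=
        (norm_sum_le _ _).trans
          (Finset.sum_le_sum fun i _ => norm_sum_le _ _)
    _ ≤ ∑ i, ∑ k, r i * r k := by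
        refine Finset.sum_le_sum fun i _ => Finset.sum_le_sum fun k _ => ?_
        simp only [norm_mul, hr]
        have h1 := entry_abs_le hσ i k
        have h2 := entry_abs_le hτ i k
        calc ‖σ i k‖ * ‖τ i k‖
            ≤ (Real.sqrt ((σ i i).re) * Real.sqrt ((σ k k).re))
              * (Real.sqrt ((τ i i).re) * Real.sqrt ((τ k k).re)) := by
              exact mul_le_mul h1 h2 (norm_nonneg _) (by positivity)
          _ = (Real.sqrt ((σ i i).re) * Real.sqrt ((τ i i).re))
              * (Real.sqrt ((σ k k).re) * Real.sqrt ((τ k k).re)) := by ring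
    _ = (∑ i, r i) ^ 2 := by rw [sq, Finset.sum_mul_sum]
    _ ≤ (∑ i, (σ i i).re) * (∑ i, (τ i i).re) := by
        refine Finset.sum_sq_le_sum_mul_sum_of_sq_eq_mul Finset.univ
          (fun i _ => hs i) (fun i _ => ht i) (fun i _ => ?_)
        rw [hr, mul_pow, Real.sq_sqrt (hs i), Real.sq_sqrt (ht i)]
    _ = 1 := by rw [hstr, httr, mul_one]

/-- The maximally entangled unit vector on `ℂ^d ⊗ ℂ^d`. -/
noncomputable def maxEntVec (d : ℕ) : Fin d × Fin d → ℂ :=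
  fun p => if p.1 = p.2 then ((1 / Real.sqrt d : ℝ) : ℂ) else 0

/-- The maximally entangled state `Ψ⁺ = |ψ⟩⟨ψ|` on `ℂ^d ⊗ ℂ^d`. -/
noncomputable def maxEntState (d : ℕ) :
    Matrix (Fin d × Fin d) (Fin d × Fin d) ℂ :=
  Matrix.of fun p q => maxEntVec d p * star (maxEntVec d q)

/-- For every `d ≥ 1` and density matrices `σ`, `τ` on `ℂ^d`, the trace distance between the
maximally entangled state and the product state `σ ⊗ₖ τ` is at least `2(1 - 1/√d)`. -/
theorem traceNorm_maxEnt_sub_product_ge (d : ℕ) (hd : 1 ≤ d)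
    (σ τ : Matrix (Fin d) (Fin d) ℂ)
    (hσ : σ.PosSemidef) (hσtr : σ.trace = 1)
    (hτ : τ.PosSemidef) (hτtr : τ.trace = 1)
    (hH : (maxEntState d - σ ⊗ₖ τ).IsHermitian) :
    2 * (1 - 1 / Real.sqrt d) ≤ ∑ i, |hH.eigenvalues i| := by
  have hd0 : (0:ℝ) < d := by exact_mod_cast hd
  have hsd : (0:ℝ) < Real.sqrt d := Real.sqrt_pos.mpr hd0
  set v := maxEntVec d with hvdef
  have hc2 : ((1 / Real.sqrt d : ℝ) : ℂ) * ((1 / Real.sqrt d : ℝ) : ℂ) = ((1 / (d:ℝ) : ℝ) : ℂ) := by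
    have hc2r : (1 / Real.sqrt d) * (1 / Real.sqrt d) = 1 / (d:ℝ) := by
      rw [div_mul_div_comm, one_mul, Real.mul_self_sqrt hd0.le]
    exact_mod_cast congrArg Complex.ofReal hc2r
  have hterm : ∀ p : Fin d × Fin d, star (v p) * v p
      = if p.1 = p.2 then ((1 / (d:ℝ) : ℝ) : ℂ) else 0 := by
    intro p
    by_cases h : p.1 = p.2 <;>
      simp only [hvdef, maxEntVec, h, if_true, if_false, RCLike.star_def, Complex.conj_ofReal,
        star_zero, mul_zero, zero_mul, hc2]
  have hv : star v ⬝ᵥ v = 1 := by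
    simp only [dotProduct, Pi.star_apply, hterm, Fintype.sum_prod_type, Finset.sum_ite_eq,
      Finset.mem_univ, if_true]
    rw [Finset.sum_const, Finset.card_univ, Fintype.card_fin, nsmul_eq_mul]
    norm_cast
    field_simp
  have hPsiV : (maxEntState d) *ᵥ v = v := by
    funext p
    have h1 : (maxEntState d *ᵥ v) p = v p * (star v ⬝ᵥ v) := by
      simp only [maxEntState, Matrix.mulVec, dotProduct, Matrix.of_apply, Pi.star_apply,
        Finset.mul_sum]
      exact Finset.sum_congr rfl fun q _ => by ring
    rw [h1, hv, mul_one]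
  have hq1 : star v ⬝ᵥ ((maxEntState d) *ᵥ v) = 1 := by rw [hPsiV, hv]
  have hstarv : ∀ p, star (v p) = v p := by
    intro p; by_cases h : p.1 = p.2 <;> simp [hvdef, maxEntVec, h, Complex.conj_ofReal]
  have h2 : ∀ p : Fin d × Fin d, ((σ ⊗ₖ τ) *ᵥ v) p
      = ((1 / Real.sqrt d : ℝ) : ℂ) * ∑ k, σ p.1 k * τ p.2 k := by
    intro p
    simp only [Matrix.mulVec, dotProduct, Fintype.sum_prod_type, hvdef, maxEntVec,
      Matrix.kroneckerMap_apply, mul_ite, mul_zero, Finset.sum_ite_eq, Finset.sum_ite_eq',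
      Finset.mem_univ, if_true]
    rw [Finset.mul_sum]
    exact Finset.sum_congr rfl fun k _ => by ring
  have hq2 : star v ⬝ᵥ ((σ ⊗ₖ τ) *ᵥ v) = ((1 / (d:ℝ) : ℝ) : ℂ) * ∑ i, ∑ k, σ i k * τ i k := by
    rw [dotProduct]
    simp only [Pi.star_apply, hstarv, h2]
    simp only [hvdef, maxEntVec, Fintype.sum_prod_type, ite_mul, zero_mul, Finset.sum_ite_eq,
      Finset.mem_univ, if_true]
    rw [Finset.mul_sum]
    refine Finset.sum_congr rfl fun i _ => ?_
    rw [← mul_assoc, hc2, Finset.mul_sum]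
  have htrPsi : (maxEntState d).trace = 1 := by
    rw [Matrix.trace, ← hv, dotProduct]
    refine Finset.sum_congr rfl fun p _ => ?_
    simp only [Matrix.diag, maxEntState, Matrix.of_apply, Pi.star_apply, hvdef]
    ring
  have htrA : (maxEntState d - σ ⊗ₖ τ).trace = 0 := by
    rw [Matrix.trace_sub, htrPsi, Matrix.trace_kronecker, hσtr, hτtr, mul_one, sub_self]
  have hquad : star v ⬝ᵥ ((maxEntState d - σ ⊗ₖ τ) *ᵥ v)
      = 1 - ((1 / (d:ℝ) : ℝ) : ℂ) * ∑ i, ∑ k, σ i k * τ i k := by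
    rw [Matrix.sub_mulVec, dotProduct_sub, hq1, hq2]
  have hmain := quad_bound hH v hv
  rw [hquad, htrA] at hmain
  have hSre : (∑ i, ∑ k, σ i k * τ i k).re ≤ 1 := frob_bound hσ hτ hσtr hτtr
  have hrecalc : (1 - ((1 / (d:ℝ) : ℝ) : ℂ) * ∑ i, ∑ k, σ i k * τ i k).re
      = 1 - (1 / (d:ℝ)) * (∑ i, ∑ k, σ i k * τ i k).re := by
    rw [Complex.sub_re, Complex.re_ofReal_mul, Complex.one_re]
  rw [hrecalc] at hmain
  have hsdd : Real.sqrt d ≤ (d:ℝ) := by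
    have h1d : (1:ℝ) ≤ d := by exact_mod_cast hd
    have := Real.sqrt_le_sqrt (show (d:ℝ) ≤ (d:ℝ)^2 by nlinarith)
    rwa [Real.sqrt_sq hd0.le] at this
  have hdiv : (1:ℝ) / d ≤ 1 / Real.sqrt d := one_div_le_one_div_of_le hsd hsdd
  have hmul : (1 / (d:ℝ)) * (∑ i, ∑ k, σ i k * τ i k).re ≤ 1 / (d:ℝ) :=
    mul_le_of_le_one_right (by positivity) hSre
  simp only [Complex.zero_re] at hmain
  linarith
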